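/- Every finite-dimensional unitary representation of the group A_∞ of finitely supported even permutations of ℕ is trivial; consequently, every finite-dimensional unitary representation of the group S_∞ of finitely supported permutations of ℕ factors through its abelianization ℤ/2ℤ, i.e. through the sign homomorphism. -/
import Mathlib


open Filter Matrix
open scoped ComplexOrder

noncomputable section

/-- The group of `k × k` complex unitary matrices. -/
abbrev UGp (k : ℕ) := Matrix.unitaryGroup (Fin k) ℂ

/-- The normalized Hilbert–Schmidt distance `‖A - B‖₂ = (τ_k((A-B)*(A-B)))^{1/2}`
on `k × k` complex matrices, where `τ_k` is the normalized trace. -/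
def hsDist (k : ℕ) (A B : Matrix (Fin k) (Fin k) ℂ) : ℝ :=
  Real.sqrt ((Matrix.trace ((A - B)ᴴ * (A - B))).re / k)

/-- The normalized trace `τ_k = (1/k)·Tr` on `k × k` complex matrices. -/
def nTrace (k : ℕ) (A : Matrix (Fin k) (Fin k) ℂ) : ℂ :=
  Matrix.trace A / k

/-- The normalized Hamming distance on the symmetric group `Sym(k)`. -/
def hammDist (k : ℕ) (σ τ : Equiv.Perm (Fin k)) : ℝ :=
  (Finset.univ.filter fun i => σ i ≠ τ i).card / k

/-- A sequence of maps `φ_n : Γ → G_n` is a partial homomorphism if for all `g, h ∈ Γ`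
there is `N` with `φ_n(gh) = φ_n(g)φ_n(h)` for all `n ≥ N`. -/
def IsPartialHom {Γ : Type*} [Group Γ] {G : ℕ → Type*} [∀ n, Group (G n)]
    (φ : ∀ n, Γ → G n) : Prop :=
  ∀ g h : Γ, ∃ N : ℕ, ∀ n ≥ N, φ n (g * h) = φ n g * φ n h

/-- An approximate homomorphism into the unitary groups `U(k_n)` with the
normalized Hilbert–Schmidt distance. -/
def IsApproxHomU {Γ : Type*} [Group Γ] (k : ℕ → ℕ)
    (φ : ∀ n, Γ → UGp (k n)) : Prop :=
  ∀ g h : Γ,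
    Tendsto (fun n => hsDist (k n) (φ n (g * h)) (φ n g * φ n h)) atTop (nhds 0)

/-- Two sequences of maps into the unitary groups `U(k_n)` are close if
`‖φ_n(g) - ψ_n(g)‖₂ → 0` for every `g`. -/
def CloseU {Γ : Type*} [Group Γ] (k : ℕ → ℕ) (φ ψ : ∀ n, Γ → UGp (k n)) : Prop :=
  ∀ g : Γ, Tendsto (fun n => hsDist (k n) (φ n g) (ψ n g)) atTop (nhds 0)

/-- A group is locally HS-stable if every approximate homomorphism into unitary
groups (with normalized Hilbert–Schmidt distance) is close to a partial homomorphism. -/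
def LocallyHSStable (Γ : Type*) [Group Γ] : Prop :=
  ∀ (k : ℕ → ℕ) (φ : ∀ n, Γ → UGp (k n)), IsApproxHomU k φ →
    ∃ ψ : ∀ n, Γ → UGp (k n), IsPartialHom ψ ∧ CloseU k φ ψ

/-- A group `Γ` is LEF if every finite subset `B ⊆ Γ` admits a map to a finite group
which is injective on `B` and multiplicative on `B`. -/
def IsLEF (Γ : Type*) [Group Γ] : Prop :=
  ∀ B : Finset Γ, ∃ (F : Type) (_ : Group F) (_ : Finite F) (φ : Γ → F),
    Set.InjOn φ ↑B ∧ ∀ g ∈ B, ∀ h ∈ B, φ (g * h) = φ g * φ h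

/-- A group is MAP if finite-dimensional unitary representations separate points. -/
def IsMAP (Γ : Type*) [Group Γ] : Prop :=
  ∀ g : Γ, g ≠ 1 → ∃ (k : ℕ) (π : Γ →* UGp k), π g ≠ 1

/-- A group is hyperlinear if it admits a separating approximate homomorphism into
the unitary groups with the normalized Hilbert–Schmidt distance. -/
def IsHyperlinear (Γ : Type*) [Group Γ] : Prop :=
  ∃ (k : ℕ → ℕ) (φ : ∀ n, Γ → UGp (k n)), IsApproxHomU k φ ∧
    ∀ g : Γ, g ≠ 1 → 0 < Filter.liminf (fun n => hsDist (k n) (φ n g) 1) atTop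

/-- The top-left `k × k` corner of an `m × m` matrix. -/
def corner {k m : ℕ} (h : k ≤ m) (A : Matrix (Fin m) (Fin m) ℂ) :
    Matrix (Fin k) (Fin k) ℂ :=
  A.submatrix (Fin.castLE h) (Fin.castLE h)

/-- Very flexible local HS-stability: every approximate homomorphism
`φ_n : Γ → U(k_n)` is close (in the corner sense) to a partial homomorphism
`ψ_n : Γ → U(m_n)` for some `m_n ≥ k_n`. -/
def VeryFlexiblyLocallyHSStable (Γ : Type*) [Group Γ] : Prop :=
  ∀ (k : ℕ → ℕ) (φ : ∀ n, Γ → UGp (k n)), IsApproxHomU k φ →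
    ∃ (m : ℕ → ℕ) (hm : ∀ n, k n ≤ m n) (ψ : ∀ n, Γ → UGp (m n)),
      IsPartialHom ψ ∧
      ∀ g : Γ, Tendsto (fun n => hsDist (k n) (φ n g) (corner (hm n) (ψ n g)))
        atTop (nhds 0)

/-- Flexible local HS-stability: as in the very flexible version, but requiring
`m_n / k_n → 1`. -/
def FlexiblyLocallyHSStable (Γ : Type*) [Group Γ] : Prop :=
  ∀ (k : ℕ → ℕ) (φ : ∀ n, Γ → UGp (k n)), IsApproxHomU k φ →
    ∃ (m : ℕ → ℕ) (hm : ∀ n, k n ≤ m n),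
      Tendsto (fun n => (m n : ℝ) / k n) atTop (nhds 1) ∧
      ∃ ψ : ∀ n, Γ → UGp (m n), IsPartialHom ψ ∧
        ∀ g : Γ, Tendsto (fun n => hsDist (k n) (φ n g) (corner (hm n) (ψ n g)))
          atTop (nhds 0)

/-- A hyperlinear approximation: an approximate homomorphism into unitary groups
with `‖φ_n(g) - 1‖₂ → √2` for every `g ≠ e`. -/
def IsHyperlinearApprox {Γ : Type*} [Group Γ] (k : ℕ → ℕ)
    (φ : ∀ n, Γ → UGp (k n)) : Prop :=
  IsApproxHomU k φ ∧
    ∀ g : Γ, g ≠ 1 →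
      Tendsto (fun n => hsDist (k n) (φ n g) 1) atTop (nhds (Real.sqrt 2))

/-- Weak HS-stability: every hyperlinear approximation is close to a sequence of
genuine homomorphisms. -/
def WeaklyHSStable (Γ : Type*) [Group Γ] : Prop :=
  ∀ (k : ℕ → ℕ) (φ : ∀ n, Γ → UGp (k n)), IsHyperlinearApprox k φ →
    ∃ ψ : ∀ n, Γ →* UGp (k n), CloseU k φ (fun n g => ψ n g)

/-- Weak local HS-stability: every hyperlinear approximation is close to a
partial homomorphism. -/
def WeaklyLocallyHSStable (Γ : Type*) [Group Γ] : Prop :=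
  ∀ (k : ℕ → ℕ) (φ : ∀ n, Γ → UGp (k n)), IsHyperlinearApprox k φ →
    ∃ ψ : ∀ n, Γ → UGp (k n), IsPartialHom ψ ∧ CloseU k φ ψ

/-- A group is amenable if it admits a left-invariant mean, here formulated as a
left-invariant finitely additive probability measure defined on all subsets
(equivalently, a left-invariant mean on `ℓ^∞(Γ)`). -/
def IsAmenable (Γ : Type*) [Group Γ] : Prop :=
  ∃ m : Set Γ → ℝ,
    (∀ A : Set Γ, 0 ≤ m A) ∧ m Set.univ = 1 ∧
    (∀ A B : Set Γ, Disjoint A B → m (A ∪ B) = m A + m B) ∧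
    (∀ (g : Γ) (A : Set Γ), m ((g * ·) '' A) = m A)

/-- A character of `Γ`: a positive definite, conjugation-invariant function with
`χ(e) = 1`. -/
def IsCharacter {Γ : Type*} [Group Γ] (χ : Γ → ℂ) : Prop :=
  (∀ (m : ℕ) (g : Fin m → Γ), (Matrix.of fun i j => χ ((g i)⁻¹ * g j)).PosSemidef) ∧
    (∀ g h : Γ, χ (g * h) = χ (h * g)) ∧ χ 1 = 1

/-- An extremal character: one that cannot be written as a nontrivial convex
combination of characters. -/
def IsExtremalCharacter {Γ : Type*} [Group Γ] (χ : Γ → ℂ) : Prop :=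
  IsCharacter χ ∧
    ∀ (t : ℝ) (χ₁ χ₂ : Γ → ℂ), 0 < t → t < 1 → IsCharacter χ₁ → IsCharacter χ₂ →
      (∀ g : Γ, χ g = (t : ℂ) * χ₁ g + (1 - (t : ℂ)) * χ₂ g) → χ₁ = χ ∧ χ₂ = χ

/-- An approximate homomorphism into the symmetric groups `Sym(k_n)` with the
normalized Hamming distance. -/
def IsApproxHomP {Γ : Type*} [Group Γ] (k : ℕ → ℕ)
    (φ : ∀ n, Γ → Equiv.Perm (Fin (k n))) : Prop :=
  ∀ g h : Γ,
    Tendsto (fun n => hammDist (k n) (φ n (g * h)) (φ n g * φ n h)) atTop (nhds 0)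

/-- A group is locally P-stable if every approximate homomorphism into symmetric
groups (with normalized Hamming distance) is close to a partial homomorphism. -/
def LocallyPStable (Γ : Type*) [Group Γ] : Prop :=
  ∀ (k : ℕ → ℕ) (φ : ∀ n, Γ → Equiv.Perm (Fin (k n))), IsApproxHomP k φ →
    ∃ ψ : ∀ n, Γ → Equiv.Perm (Fin (k n)), IsPartialHom ψ ∧
      ∀ g : Γ, Tendsto (fun n => hammDist (k n) (φ n g) (ψ n g)) atTop (nhds 0)

/-- A group is finitely presented if it is the quotient of a finitely generated
free group by the normal closure of finitely many relators. -/
def IsFinitelyPresented (Γ : Type*) [Group Γ] : Prop :=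
  ∃ (n : ℕ) (π : FreeGroup (Fin n) →* Γ) (R : Finset (FreeGroup (Fin n))),
    Function.Surjective π ∧ π.ker = Subgroup.normalClosure (R : Set (FreeGroup (Fin n)))


/-- The group `S_∞` of finitely supported permutations of `ℕ`, as a subgroup of
`Equiv.Perm ℕ`. -/
def SInf : Subgroup (Equiv.Perm ℕ) where
  carrier := {σ | {x : ℕ | σ x ≠ x}.Finite}
  one_mem' := by simp
  mul_mem' := by
    intro σ τ hσ hτ
    refine (hσ.union hτ).subset ?_
    intro x hx
    simp only [Set.mem_setOf_eq, Equiv.Perm.mul_apply] at hx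
    by_contra h
    simp only [Set.mem_union, Set.mem_setOf_eq, not_or, not_not] at h
    exact hx (by rw [h.2, h.1])
  inv_mem' := by
    intro σ hσ
    refine hσ.subset ?_
    intro x hx
    simp only [Set.mem_setOf_eq] at hx ⊢
    intro h
    exact hx (Equiv.Perm.inv_eq_iff_eq.mpr h.symm)

/-- The embedding `Sym(n) → Sym(ℕ)` extending permutations of `{0, …, n-1}` by the
identity. -/
def embedPerm (n : ℕ) : Equiv.Perm (Fin n) →* Equiv.Perm ℕ :=
  Equiv.Perm.extendDomainHom (Fin.equivSubtype)

/-- The group `A_∞` of finitely supported even permutations of `ℕ`: the union of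
the (images of the) finite alternating groups `A_n`. -/
def AInf : Subgroup (Equiv.Perm ℕ) :=
  ⨆ n : ℕ, Subgroup.map (embedPerm n) (alternatingGroup (Fin n))


open Finset


private lemma neg_one_pow_mod_two (n : ℕ) : ((-1:ℂ))^(n % 2) = (-1)^n := by
  conv_rhs => rw [← Nat.div_add_mod n 2]
  rw [pow_add, pow_mul, neg_one_sq, one_pow, one_mul]

private lemma eps_add (a b : ZMod 2) :
    ((-1:ℂ))^((a+b).val) = (-1)^a.val * (-1)^b.val := by
  rw [ZMod.val_add, neg_one_pow_mod_two, pow_add]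

lemma zmod2_cases (a : ZMod 2) : a = 0 ∨ a = 1 := by revert a; decide

/-- character of (ZMod 2)^m -/
def chi {m : ℕ} (w v : Fin m → ZMod 2) : ℂ :=
  ∏ i, (-1 : ℂ)^((w i * v i).val)

lemma chi_comm {m : ℕ} (w v : Fin m → ZMod 2) : chi w v = chi v w := by
  unfold chi
  exact Finset.prod_congr rfl fun i _ => by rw [mul_comm]

lemma chi_add_right {m : ℕ} (w v v' : Fin m → ZMod 2) :
    chi w (v + v') = chi w v * chi w v' := by
  unfold chi
  rw [← Finset.prod_mul_distrib]
  exact Finset.prod_congr rfl fun i _ => by rw [Pi.add_apply, mul_add, eps_add]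

lemma chi_add_left {m : ℕ} (w w' v : Fin m → ZMod 2) :
    chi (w + w') v = chi w v * chi w' v := by
  rw [chi_comm, chi_add_right, chi_comm v w, chi_comm v w']

lemma chi_zero_right {m : ℕ} (w : Fin m → ZMod 2) : chi w 0 = 1 := by
  unfold chi
  apply Finset.prod_eq_one
  intro i _
  simp

lemma sum_chi {m : ℕ} (w : Fin m → ZMod 2) :
    ∑ v : Fin m → ZMod 2, chi w v = if w = 0 then (2:ℂ)^m else 0 := by
  have key : ∀ a : ZMod 2, (∑ x : ZMod 2, (-1:ℂ)^((a * x).val)) = if a = 0 then 2 else 0 := by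
    intro a
    have hu : (Finset.univ : Finset (ZMod 2)) = {0, 1} := by decide
    rw [hu, Finset.sum_insert (by decide), Finset.sum_singleton]
    have h1 : (ZMod.val (1 : ZMod 2)) = 1 := rfl
    rcases zmod2_cases a with h | h <;> subst h <;> simp [h1] <;> norm_num
  have hps := Finset.prod_univ_sum (fun _ : Fin m => (Finset.univ : Finset (ZMod 2)))
      (fun i x => (-1:ℂ)^((w i * x).val))
  rw [Fintype.piFinset_univ] at hps
  have : ∑ v : Fin m → ZMod 2, chi w v = ∏ i, ∑ x : ZMod 2, (-1:ℂ)^((w i * x).val) := by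
    rw [hps]; rfl
  rw [this]
  by_cases hw : w = 0
  · subst hw
    simp only [if_pos rfl, Pi.zero_apply]
    rw [Finset.prod_congr rfl fun i (_ : i ∈ Finset.univ) => key 0]
    simp
  · rw [if_neg hw]
    obtain ⟨i, hi⟩ : ∃ i, w i ≠ 0 := by
      by_contra h
      push_neg at h
      exact hw (funext h)
    apply Finset.prod_eq_zero (Finset.mem_univ i)
    rw [key (w i), if_neg hi]
section PP
open Finset

variable {d m : ℕ} (F : (Fin m → ZMod 2) → Matrix (Fin d) (Fin d) ℂ)

/-- Fourier projections -/
def Pmat (w : Fin m → ZMod 2) : Matrix (Fin d) (Fin d) ℂ :=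
  ((2:ℂ)^m)⁻¹ • ∑ v, chi w v • F v

lemma two_pow_ne {m : ℕ} : ((2:ℂ)^m) ≠ 0 := pow_ne_zero _ two_ne_zero

lemma pi_add_self (v : Fin m → ZMod 2) : v + v = 0 := by
  funext i
  have : ∀ a : ZMod 2, a + a = 0 := by decide
  exact this (v i)

lemma pi_add_eq_zero_iff {v u : Fin m → ZMod 2} : v + u = 0 ↔ u = v := by
  constructor
  · intro h
    have := congrArg (v + ·) h
    simpa [← add_assoc, pi_add_self] using this
  · rintro rfl; exact pi_add_self _

lemma Pmat_mul (hmul : ∀ v w, F (v + w) = F v * F w) (w w' : Fin m → ZMod 2) :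
    Pmat F w * Pmat F w' = if w = w' then Pmat F w else 0 := by
  have expand : Pmat F w * Pmat F w'
      = (((2:ℂ)^m)⁻¹ * ((2:ℂ)^m)⁻¹) • ∑ v, ∑ v', (chi w v * chi w' v') • F (v + v') := by
    unfold Pmat
    rw [smul_mul_smul_comm, Finset.sum_mul_sum]
    congr 1
    refine Finset.sum_congr rfl fun v _ => ?_
    refine Finset.sum_congr rfl fun v' _ => ?_
    rw [smul_mul_smul_comm, hmul]
  have reindex : ∀ v : Fin m → ZMod 2,
      (∑ v', (chi w v * chi w' v') • F (v + v'))
        = ∑ u, (chi w v * chi w' (v + u)) • F u := by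
    intro v
    apply Fintype.sum_equiv (Equiv.addLeft v)
    intro u
    simp only [Equiv.coe_addLeft]
    congr 2
    rw [← add_assoc, pi_add_self, zero_add]
  rw [expand]
  have step2 : (∑ v, ∑ v', (chi w v * chi w' v') • F (v + v'))
      = ∑ u, (chi w' u * ∑ v, chi (w + w') v) • F u := by
    rw [Finset.sum_congr rfl fun v _ => reindex v, Finset.sum_comm]
    refine Finset.sum_congr rfl fun u _ => ?_
    rw [← Finset.sum_smul]
    congr 1
    rw [Finset.mul_sum]
    refine Finset.sum_congr rfl fun v _ => ?_
    rw [chi_add_right, chi_add_left]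
    ring
  rw [step2]
  by_cases hww : w = w'
  · subst hww
    rw [if_pos rfl, sum_chi (w + w), if_pos (pi_add_self w)]
    have key : ∀ u : Fin m → ZMod 2, (chi w u * (2:ℂ)^m) • F u
        = ((2:ℂ)^m) • (chi w u • F u) := by
      intro u
      rw [smul_smul, mul_comm]
    rw [Finset.sum_congr rfl fun u _ => key u, ← Finset.smul_sum, smul_smul]
    unfold Pmat
    congr 1
    rw [mul_assoc, inv_mul_cancel₀ two_pow_ne, mul_one]
  · rw [if_neg hww]
    have hne : w + w' ≠ 0 := fun h => hww (pi_add_eq_zero_iff.mp h).symm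
    rw [sum_chi (w + w'), if_neg hne]
    simp

lemma sum_Pmat (hone : F 0 = 1) : ∑ w, Pmat F w = 1 := by
  unfold Pmat
  rw [← Finset.smul_sum, Finset.sum_comm]
  have key : ∀ v : Fin m → ZMod 2, (∑ w, chi w v • F v) = (if v = 0 then (2:ℂ)^m else 0) • F v := by
    intro v
    rw [← Finset.sum_smul]
    congr 1
    rw [Finset.sum_congr rfl fun w _ => chi_comm w v, sum_chi v]
  rw [Finset.sum_congr rfl fun v _ => key v]
  rw [Finset.sum_eq_single 0 (fun v _ hv => by rw [if_neg hv, zero_smul]) (by simp)]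
  rw [if_pos rfl, hone, smul_smul]
  rw [inv_mul_cancel₀ two_pow_ne, one_smul]

lemma inv_fourier (v : Fin m → ZMod 2) : ∑ w, chi w v • Pmat F w = F v := by
  unfold Pmat
  have key : ∀ w : Fin m → ZMod 2, chi w v • (((2:ℂ)^m)⁻¹ • ∑ u, chi w u • F u)
      = ((2:ℂ)^m)⁻¹ • ∑ u, (chi w v * chi w u) • F u := by
    intro w
    rw [smul_comm, Finset.smul_sum]
    congr 1
    refine Finset.sum_congr rfl fun u _ => ?_
    rw [smul_smul]
  rw [Finset.sum_congr rfl fun w _ => key w, ← Finset.smul_sum, Finset.sum_comm]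
  have inner : ∀ u : Fin m → ZMod 2,
      (∑ w, (chi w v * chi w u) • F u) = (if v + u = 0 then (2:ℂ)^m else 0) • F u := by
    intro u
    rw [← Finset.sum_smul]
    congr 1
    rw [Finset.sum_congr rfl fun w _ => by rw [← chi_add_right], ← sum_chi (v + u)]
    exact Finset.sum_congr rfl fun w _ => chi_comm w (v + u)
  rw [Finset.sum_congr rfl fun u _ => inner u]
  rw [Finset.sum_eq_single v (fun u _ hu => by
      rw [if_neg fun h => hu (pi_add_eq_zero_iff.mp h), zero_smul])
    (by simp)]
  rw [if_pos (pi_add_self v), smul_smul]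
  rw [inv_mul_cancel₀ two_pow_ne, one_smul]

end PP
section Core
open Finset Module

lemma eps_sum {ι : Type*} (s : Finset ι) (x : ι → ZMod 2) :
    ∏ i ∈ s, ((-1:ℂ))^((x i).val) = (-1)^((∑ i ∈ s, x i).val) := by
  induction s using Finset.cons_induction with
  | empty => simp
  | cons a s ha ih =>
    rw [Finset.prod_cons, Finset.sum_cons, ih, eps_add]

lemma core_lemma {d m : ℕ} (hdm : d * d < m)
    (F : (Fin m → ZMod 2) → Matrix (Fin d) (Fin d) ℂ)
    (hone : F 0 = 1) (hmul : ∀ v w, F (v + w) = F v * F w) :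
    ∃ v : Fin m → ZMod 2, v ≠ 0 ∧ F v = 1 := by
  classical
  set S : Finset (Fin m → ZMod 2) := Finset.univ.filter (fun w => Pmat F w ≠ 0) with hS
  -- the nonzero projections are linearly independent
  have hind : LinearIndependent ℂ (fun w : {w // w ∈ S} => Pmat F w) := by
    rw [Fintype.linearIndependent_iff]
    intro g hg w₀
    have h0 : (∑ w : {w // w ∈ S}, g w • Pmat F (w : Fin m → ZMod 2)) * Pmat F w₀ = 0 := by
      rw [hg, zero_mul]
    rw [Finset.sum_mul] at h0
    have hterm : ∀ w : {w // w ∈ S},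
        (g w • Pmat F (w : Fin m → ZMod 2)) * Pmat F (w₀ : Fin m → ZMod 2)
          = if w = w₀ then g w • Pmat F w₀ else 0 := by
      intro w
      rw [smul_mul_assoc, Pmat_mul F hmul]
      by_cases h : w = w₀
      · subst h; simp
      · rw [if_neg h, if_neg (fun hc => h (Subtype.ext hc)), smul_zero]
    rw [Finset.sum_congr rfl fun w _ => hterm w, Finset.sum_ite_eq' Finset.univ w₀] at h0
    simp only [Finset.mem_univ, if_pos] at h0
    have hP : Pmat F (w₀ : Fin m → ZMod 2) ≠ 0 := (Finset.mem_filter.mp w₀.2).2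
    rcases smul_eq_zero.mp h0 with h | h
    · exact h
    · exact absurd h hP
  have hScard : S.card ≤ d * d := by
    have := hind.fintype_card_le_finrank
    rw [Fintype.card_coe] at this
    refine this.trans ?_
    rw [Module.finrank_matrix]
    simp
  -- a nonzero vector annihilated by all characters in S
  haveI : Fact (Nat.Prime 2) := ⟨Nat.prime_two⟩
  let L : (Fin m → ZMod 2) →ₗ[ZMod 2] ({w // w ∈ S} → ZMod 2) :=
    { toFun := fun v => fun w => ∑ i, (w : Fin m → ZMod 2) i * v i
      map_add' := by
        intro a b
        funext w
        simp only [Pi.add_apply, mul_add, Finset.sum_add_distrib]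
      map_smul' := by
        intro c a
        funext w
        simp only [Pi.smul_apply, smul_eq_mul, RingHom.id_apply, Finset.mul_sum]
        exact Finset.sum_congr rfl fun i _ => by ring }
  have hnotinj : ¬ Function.Injective L := by
    intro hinj
    have := LinearMap.finrank_le_finrank_of_injective hinj
    rw [Module.finrank_pi, Module.finrank_pi, Fintype.card_fin, Fintype.card_coe] at this
    omega
  rw [injective_iff_map_eq_zero'] at hnotinj
  push_neg at hnotinj
  obtain ⟨v₀, hv⟩ := hnotinj
  rcases hv with ⟨hL0, hv0⟩ | ⟨hLne, rfl⟩
  swap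
  · exact absurd (map_zero L) hLne
  refine ⟨v₀, hv0, ?_⟩
  have hchi : ∀ w ∈ S, chi w v₀ = 1 := by
    intro w hw
    have hzero : (∑ i, w i * v₀ i) = 0 := congrFun hL0 ⟨w, hw⟩
    have : chi w v₀ = (-1:ℂ)^((∑ i, w i * v₀ i).val) := eps_sum Finset.univ fun i => w i * v₀ i
    rw [this, hzero]
    simp
  calc F v₀ = ∑ w, chi w v₀ • Pmat F w := (inv_fourier F v₀).symm
    _ = ∑ w, Pmat F w := by
        refine Finset.sum_congr rfl fun w _ => ?_
        by_cases hw : w ∈ S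
        · rw [hchi w hw, one_smul]
        · have hP0 : Pmat F w = 0 := by
            by_contra hne
            exact hw (Finset.mem_filter.mpr ⟨Finset.mem_univ w, hne⟩)
          rw [hP0, smul_zero]
    _ = 1 := sum_Pmat F hone

end Core
section PermMachinery
open Equiv Finset

lemma commute_swap_of_ne {α : Type*} [DecidableEq α] {a b c d : α}
    (h1 : a ≠ c) (h2 : a ≠ d) (h3 : b ≠ c) (h4 : b ≠ d) :
    Commute (Equiv.swap a b) (Equiv.swap c d) := by
  apply Equiv.Perm.Disjoint.commute
  intro x
  by_cases hxa : x = a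
  · subst hxa; right; exact Equiv.swap_apply_of_ne_of_ne h1 h2
  by_cases hxb : x = b
  · subst hxb; right; exact Equiv.swap_apply_of_ne_of_ne h3 h4
  · left; exact Equiv.swap_apply_of_ne_of_ne hxa hxb

lemma mul_sq_of_commute {G : Type*} [Group G] {s t : G} (h : Commute s t)
    (hs : s * s = 1) (ht : t * t = 1) : (s * t) * (s * t) = 1 := by
  rw [mul_assoc, ← mul_assoc t s t, ← h.eq, mul_assoc, ht, mul_one, hs]

/-- the double transposition on block `i`: `(4i, 4i+1)(4i+2, 4i+3)` -/
def blockPerm (i : ℕ) : Equiv.Perm ℕ :=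
  Equiv.swap (4*i) (4*i+1) * Equiv.swap (4*i+2) (4*i+3)

lemma blockPerm_commute {i j : ℕ} (hij : i ≠ j) : Commute (blockPerm i) (blockPerm j) := by
  unfold blockPerm
  refine Commute.mul_left ?_ ?_ <;> refine Commute.mul_right ?_ ?_ <;>
    refine commute_swap_of_ne ?_ ?_ ?_ ?_ <;> omega

lemma blockPerm_sq (i : ℕ) : blockPerm i * blockPerm i = 1 :=
  mul_sq_of_commute (commute_swap_of_ne (by omega) (by omega) (by omega) (by omega))
    (Equiv.swap_mul_self _ _) (Equiv.swap_mul_self _ _)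

lemma swap_commute_blockPerm {a b j : ℕ}
    (h1 : a ≠ 4*j) (h2 : a ≠ 4*j+1) (h3 : a ≠ 4*j+2) (h4 : a ≠ 4*j+3)
    (h5 : b ≠ 4*j) (h6 : b ≠ 4*j+1) (h7 : b ≠ 4*j+2) (h8 : b ≠ 4*j+3) :
    Commute (Equiv.swap a b) (blockPerm j) :=
  Commute.mul_right (commute_swap_of_ne h1 h2 h5 h6) (commute_swap_of_ne h3 h4 h7 h8)

/-- `embedPerm` on points below `n` -/
lemma embedPerm_apply_lt (n : ℕ) (σ : Equiv.Perm (Fin n)) {x : ℕ} (hx : x < n) :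
    embedPerm n σ x = (σ ⟨x, hx⟩ : ℕ) := by
  exact Equiv.Perm.extendDomain_apply_subtype σ Fin.equivSubtype hx

lemma embedPerm_apply_ge (n : ℕ) (σ : Equiv.Perm (Fin n)) {x : ℕ} (hx : ¬ x < n) :
    embedPerm n σ x = x :=
  Equiv.Perm.extendDomain_apply_not_subtype σ Fin.equivSubtype hx

lemma embedPerm_swap {n : ℕ} (a b : Fin n) :
    embedPerm n (Equiv.swap a b) = Equiv.swap (a : ℕ) (b : ℕ) := by
  ext x
  by_cases hx : x < n
  · rw [embedPerm_apply_lt n _ hx, Equiv.swap_apply_def, Equiv.swap_apply_def]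
    split_ifs with g1 g2 <;>
      simp_all [Fin.ext_iff]
  · rw [embedPerm_apply_ge n _ hx,
      Equiv.swap_apply_of_ne_of_ne (by omega : x ≠ (a:ℕ)) (by omega : x ≠ (b:ℕ))]

lemma embed_mem_AInf {n : ℕ} {τ : Equiv.Perm (Fin n)} (h : τ ∈ alternatingGroup (Fin n)) :
    embedPerm n τ ∈ AInf :=
  (le_iSup (fun k => Subgroup.map (embedPerm k) (alternatingGroup (Fin k))) n)
    (Subgroup.mem_map.mpr ⟨τ, h, rfl⟩)

lemma swap_mul_swap_mem {a b c d : ℕ} (hab : a ≠ b) (hcd : c ≠ d) :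
    Equiv.swap a b * Equiv.swap c d ∈ AInf := by
  set n := a + b + c + d + 1 with hn
  have ha : a < n := by omega
  have hb : b < n := by omega
  have hc : c < n := by omega
  have hd : d < n := by omega
  have key : Equiv.swap a b * Equiv.swap c d
      = embedPerm n (Equiv.swap ⟨a, ha⟩ ⟨b, hb⟩ * Equiv.swap ⟨c, hc⟩ ⟨d, hd⟩) := by
    rw [_root_.map_mul, embedPerm_swap, embedPerm_swap]
  rw [key]
  apply embed_mem_AInf
  rw [Equiv.Perm.mem_alternatingGroup, _root_.map_mul,
    Equiv.Perm.sign_swap (by simpa [Fin.ext_iff] using hab),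
    Equiv.Perm.sign_swap (by simpa [Fin.ext_iff] using hcd)]
  norm_num

end PermMachinery
section ZmapSec
open Equiv Finset

variable {m : ℕ}

private def bfun (v : Fin m → ZMod 2) : Fin m → Equiv.Perm ℕ :=
  fun i => if v i = 1 then blockPerm (i : ℕ) else 1

lemma bfun_comm (v w : Fin m → ZMod 2) :
    (((Finset.univ : Finset (Fin m)) : Set (Fin m))).Pairwise fun x y => Commute (bfun v x) (bfun w y) := by
  intro i _ j _ hij
  unfold bfun
  by_cases h1 : v i = 1 <;> by_cases h2 : w j = 1 <;>
    simp only [h1, h2, if_pos, if_neg, if_true, if_false]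
  · exact blockPerm_commute fun h => hij (Fin.val_injective h)
  all_goals first
    | exact Commute.one_right _
    | exact Commute.one_left _
    | simp [h1]
    | simp [h2]

lemma bfun_comm' (v : Fin m → ZMod 2) :
    (((Finset.univ : Finset (Fin m)) : Set (Fin m))).Pairwise (Function.onFun Commute (bfun v)) :=
  bfun_comm v v

/-- the permutation `∏ᵢ blockPerm(i)^{v i}` -/
def Zmap (v : Fin m → ZMod 2) : Equiv.Perm ℕ :=
  Finset.univ.noncommProd (bfun v) (bfun_comm' v)

lemma Zmap_zero : Zmap (0 : Fin m → ZMod 2) = 1 := by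
  apply Finset.noncommProd_induction _ _ _ (fun σ => σ = 1)
  · intro a b ha hb; rw [ha, hb, one_mul]
  · rfl
  · intro i _
    have : (0 : Fin m → ZMod 2) i ≠ 1 := by simp
    simp [bfun, this]

lemma Zmap_add (v w : Fin m → ZMod 2) : Zmap (v + w) = Zmap v * Zmap w := by
  unfold Zmap
  rw [← Finset.noncommProd_mul_distrib (bfun v) (bfun w) (bfun_comm' v) (bfun_comm' w)
      (bfun_comm w v)]
  apply Finset.noncommProd_congr rfl
  intro i _
  simp only [Pi.mul_apply, bfun, Pi.add_apply]
  rcases zmod2_cases (v i) with h1 | h1 <;> rcases zmod2_cases (w i) with h2 | h2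
  · have e : v i + w i ≠ 1 := by rw [h1, h2]; decide
    rw [if_neg e, if_neg (show ¬ v i = 1 by rw [h1]; decide),
      if_neg (show ¬ w i = 1 by rw [h2]; decide), one_mul]
  · have e : v i + w i = 1 := by rw [h1, h2]; decide
    rw [if_pos e, if_neg (show ¬ v i = 1 by rw [h1]; decide), if_pos h2, one_mul]
  · have e : v i + w i = 1 := by rw [h1, h2]; decide
    rw [if_pos e, if_pos h1, if_neg (show ¬ w i = 1 by rw [h2]; decide), mul_one]
  · have e : v i + w i ≠ 1 := by rw [h1, h2]; decide
    rw [if_neg e, if_pos h1, if_pos h2]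
    exact (blockPerm_sq _).symm

lemma Zmap_sq (v : Fin m → ZMod 2) : Zmap v * Zmap v = 1 := by
  have := Zmap_add v v
  rw [pi_add_self, Zmap_zero] at this
  exact this.symm

lemma Zmap_mem_AInf (v : Fin m → ZMod 2) : Zmap v ∈ AInf := by
  apply Finset.noncommProd_induction _ _ _ (fun σ => σ ∈ AInf)
  · exact fun a b ha hb => mul_mem ha hb
  · exact one_mem _
  · intro i _
    unfold bfun
    by_cases h : v i = 1
    · rw [if_pos h]
      exact swap_mul_swap_mem (by omega) (by omega)
    · rw [if_neg h]; exact one_mem _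

end ZmapSec
section KSec
open Equiv Finset

lemma noncommProd_sq {α : Type*} {G : Type*} [Group G] (s : Finset α) (f : α → G)
    (comm : (↑s : Set α).Pairwise (Function.onFun Commute f))
    (h : ∀ i ∈ s, f i * f i = 1) :
    s.noncommProd f comm * s.noncommProd f comm = 1 := by
  induction s using Finset.cons_induction with
  | empty => simp
  | cons a s ha ih =>
    rw [Finset.noncommProd_cons]
    have hcomm : ∀ x ∈ s, Commute (f a) (f x) := fun x hx =>
      comm (Finset.mem_cons_self a s) (Finset.mem_cons_of_mem hx)
        (fun e => ha (e ▸ hx))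
    have hc : Commute (f a)
        (s.noncommProd f (comm.mono (by intro u hu; simp only [Finset.coe_cons, Set.mem_insert_iff]; exact Or.inr hu))) :=
      Finset.noncommProd_commute _ _ _ _ hcomm
    exact mul_sq_of_commute hc (h a (Finset.mem_cons_self a s))
      (ih _ fun i hi => h i (Finset.mem_cons_of_mem hi))

variable {d : ℕ} (π : ↥AInf →* UGp d)

def Kgrp : Subgroup (Equiv.Perm ℕ) := Subgroup.map AInf.subtype π.ker

lemma mem_Kgrp {σ : Equiv.Perm ℕ} :
    σ ∈ Kgrp π ↔ ∃ h : σ ∈ AInf, π ⟨σ, h⟩ = 1 := by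
  constructor
  · intro hσ
    obtain ⟨τ, hker, hτeq⟩ := Subgroup.mem_map.mp hσ
    obtain ⟨τv, hτv⟩ := τ
    cases hτeq
    exact ⟨hτv, hker⟩
  · rintro ⟨h, h1⟩
    exact Subgroup.mem_map.mpr ⟨⟨σ, h⟩, h1, rfl⟩

lemma Kgrp_conj {γ σ : Equiv.Perm ℕ} (hγ : γ ∈ AInf) (hσ : σ ∈ Kgrp π) :
    γ * σ * γ⁻¹ ∈ Kgrp π := by
  rw [mem_Kgrp] at hσ ⊢
  obtain ⟨hmem, h1⟩ := hσ
  have hmem' : γ * σ * γ⁻¹ ∈ AInf := mul_mem (mul_mem hγ hmem) (inv_mem hγ)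
  refine ⟨hmem', ?_⟩
  have e : (⟨γ * σ * γ⁻¹, hmem'⟩ : ↥AInf) = ⟨γ, hγ⟩ * ⟨σ, hmem⟩ * (⟨γ, hγ⟩ : ↥AInf)⁻¹ := rfl
  rw [e, _root_.map_mul, _root_.map_mul, h1, mul_one, map_inv, mul_inv_cancel]

lemma Kgrp_conj_swap_pair {a b c e : ℕ} {γ : Equiv.Perm ℕ} (hγ : γ ∈ AInf)
    (h : Equiv.swap a b * Equiv.swap c e ∈ Kgrp π) :
    Equiv.swap (γ a) (γ b) * Equiv.swap (γ c) (γ e) ∈ Kgrp π := by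
  rw [Equiv.swap_apply_apply, Equiv.swap_apply_apply]
  have hg : γ * Equiv.swap a b * γ⁻¹ * (γ * Equiv.swap c e * γ⁻¹)
      = γ * (Equiv.swap a b * Equiv.swap c e) * γ⁻¹ := by group
  rw [hg]
  exact Kgrp_conj π hγ h

/-- conjugating a `T`-three-cycle to any other -/
lemma T_conj_all {a b c x y z : ℕ} (hab : a ≠ b) (hbc : b ≠ c) (hac : a ≠ c)
    (hxy : x ≠ y) (hyz : y ≠ z) (hxz : x ≠ z)
    (hK : Equiv.swap a b * Equiv.swap b c ∈ Kgrp π) :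
    Equiv.swap x y * Equiv.swap y z ∈ Kgrp π := by
  set B : ℕ := a + b + c + x + y + z + 1 with hB
  have step : ∀ p q r : ℕ, p ≠ q → q ≠ r → p ≠ r → p < B → q < B → r < B →
      Equiv.swap p q * Equiv.swap q r ∈ Kgrp π →
      Equiv.swap B (B+1) * Equiv.swap (B+1) (B+2) ∈ Kgrp π := by
    intro p q r hpq hqr hpr hpB hqB hrB hKT
    set γ : Equiv.Perm ℕ := (Equiv.swap p B * Equiv.swap q (B+1)) *
      (Equiv.swap r (B+2) * Equiv.swap (B+5) (B+6)) with hγdef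
    have hγA : γ ∈ AInf := mul_mem
      (swap_mul_swap_mem (by omega) (by omega))
      (swap_mul_swap_mem (by omega) (by omega))
    have hγp : γ p = B := by
      have f4 : Equiv.swap (B+5) (B+6) p = p := Equiv.swap_apply_of_ne_of_ne (by omega) (by omega)
      have f3 : Equiv.swap r (B+2) p = p := Equiv.swap_apply_of_ne_of_ne (by omega) (by omega)
      have f2 : Equiv.swap q (B+1) p = p := Equiv.swap_apply_of_ne_of_ne (by omega) (by omega)
      have f1 : Equiv.swap p B p = B := Equiv.swap_apply_left _ _
      rw [hγdef, Equiv.Perm.mul_apply, Equiv.Perm.mul_apply, Equiv.Perm.mul_apply, f4, f3, f2, f1]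
    have hγq : γ q = B + 1 := by
      have f4 : Equiv.swap (B+5) (B+6) q = q := Equiv.swap_apply_of_ne_of_ne (by omega) (by omega)
      have f3 : Equiv.swap r (B+2) q = q := Equiv.swap_apply_of_ne_of_ne (by omega) (by omega)
      have f2 : Equiv.swap q (B+1) q = B + 1 := Equiv.swap_apply_left _ _
      have f1 : Equiv.swap p B (B + 1) = B + 1 := Equiv.swap_apply_of_ne_of_ne (by omega) (by omega)
      rw [hγdef, Equiv.Perm.mul_apply, Equiv.Perm.mul_apply, Equiv.Perm.mul_apply, f4, f3, f2, f1]
    have hγr : γ r = B + 2 := by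
      have f4 : Equiv.swap (B+5) (B+6) r = r := Equiv.swap_apply_of_ne_of_ne (by omega) (by omega)
      have f3 : Equiv.swap r (B+2) r = B + 2 := Equiv.swap_apply_left _ _
      have f2 : Equiv.swap q (B+1) (B + 2) = B + 2 := Equiv.swap_apply_of_ne_of_ne (by omega) (by omega)
      have f1 : Equiv.swap p B (B + 2) = B + 2 := Equiv.swap_apply_of_ne_of_ne (by omega) (by omega)
      rw [hγdef, Equiv.Perm.mul_apply, Equiv.Perm.mul_apply, Equiv.Perm.mul_apply, f4, f3, f2, f1]
    have := Kgrp_conj_swap_pair π hγA hKT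
    rwa [hγp, hγq, hγr] at this
  have hmid : Equiv.swap B (B+1) * Equiv.swap (B+1) (B+2) ∈ Kgrp π :=
    step a b c hab hbc hac (by omega) (by omega) (by omega) hK
  set γ : Equiv.Perm ℕ := (Equiv.swap x B * Equiv.swap y (B+1)) *
    (Equiv.swap z (B+2) * Equiv.swap (B+5) (B+6)) with hγdef
  have hγA : γ ∈ AInf := mul_mem
    (swap_mul_swap_mem (by omega) (by omega))
    (swap_mul_swap_mem (by omega) (by omega))
  have hγB : γ B = x := by
    have f4 : Equiv.swap (B+5) (B+6) B = B := Equiv.swap_apply_of_ne_of_ne (by omega) (by omega)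
    have f3 : Equiv.swap z (B+2) B = B := Equiv.swap_apply_of_ne_of_ne (by omega) (by omega)
    have f2 : Equiv.swap y (B+1) B = B := Equiv.swap_apply_of_ne_of_ne (by omega) (by omega)
    have f1 : Equiv.swap x B B = x := Equiv.swap_apply_right _ _
    rw [hγdef, Equiv.Perm.mul_apply, Equiv.Perm.mul_apply, Equiv.Perm.mul_apply, f4, f3, f2, f1]
  have hγB1 : γ (B+1) = y := by
    have f4 : Equiv.swap (B+5) (B+6) (B+1) = B+1 := Equiv.swap_apply_of_ne_of_ne (by omega) (by omega)
    have f3 : Equiv.swap z (B+2) (B+1) = B+1 := Equiv.swap_apply_of_ne_of_ne (by omega) (by omega)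
    have f2 : Equiv.swap y (B+1) (B+1) = y := Equiv.swap_apply_right _ _
    have f1 : Equiv.swap x B y = y := Equiv.swap_apply_of_ne_of_ne (by omega) (by omega)
    rw [hγdef, Equiv.Perm.mul_apply, Equiv.Perm.mul_apply, Equiv.Perm.mul_apply, f4, f3, f2, f1]
  have hγB2 : γ (B+2) = z := by
    have f4 : Equiv.swap (B+5) (B+6) (B+2) = B+2 := Equiv.swap_apply_of_ne_of_ne (by omega) (by omega)
    have f3 : Equiv.swap z (B+2) (B+2) = z := Equiv.swap_apply_right _ _
    have f2 : Equiv.swap y (B+1) z = z := Equiv.swap_apply_of_ne_of_ne (by omega) (by omega)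
    have f1 : Equiv.swap x B z = z := Equiv.swap_apply_of_ne_of_ne (by omega) (by omega)
    rw [hγdef, Equiv.Perm.mul_apply, Equiv.Perm.mul_apply, Equiv.Perm.mul_apply, f4, f3, f2, f1]
  have := Kgrp_conj_swap_pair π hγA hmid
  rwa [hγB, hγB1, hγB2] at this

end KSec
section Reduction
open Equiv Finset

variable {d : ℕ} (π : ↥AInf →* UGp d)

lemma Zmap_reduction {m : ℕ} {v : Fin m → ZMod 2} (hv : v ≠ 0)
    (hZ : Zmap v ∈ Kgrp π) :
    ∃ a b c : ℕ, a ≠ b ∧ b ≠ c ∧ a ≠ c ∧ Equiv.swap a b * Equiv.swap b c ∈ Kgrp π := by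
  obtain ⟨i₀, hi₀⟩ : ∃ i, v i = 1 := by
    by_contra h
    push_neg at h
    apply hv
    funext i
    rcases zmod2_cases (v i) with h0 | h1
    · exact h0
    · exact absurd h1 (h i)
  have him : (i₀ : ℕ) < m := i₀.isLt
  set p : ℕ := 4 * (i₀ : ℕ) with hp
  set Bn : ℕ := 4 * m with hBn
  set W : Equiv.Perm ℕ := (Finset.univ.erase i₀).noncommProd (bfun v)
    ((bfun_comm' v).mono (Finset.coe_subset.mpr (Finset.erase_subset _ _))) with hWdef
  have hsplit : Zmap v = (Equiv.swap p (p+1) * Equiv.swap (p+2) (p+3)) * W := by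
    unfold Zmap
    rw [← Finset.mul_noncommProd_erase Finset.univ (Finset.mem_univ i₀) (bfun v) (bfun_comm' v)]
    congr 1
    unfold bfun
    rw [if_pos hi₀]
    rfl
  have key : ∀ (a b : ℕ),
      (∀ j : ℕ, j < m → j ≠ (i₀:ℕ) → (a < 4*j ∨ a ≥ 4*j+4) ∧ (b < 4*j ∨ b ≥ 4*j+4)) →
      Commute (Equiv.swap a b) W := by
    intro a b hab
    apply Finset.noncommProd_commute
    intro j hj
    have hji : j ≠ i₀ := (Finset.mem_erase.mp hj).1
    have hjm : (j:ℕ) < m := j.isLt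
    have hji' : (j:ℕ) ≠ (i₀:ℕ) := fun e => hji (Fin.val_injective e)
    obtain ⟨ha, hb⟩ := hab j hjm hji'
    unfold bfun
    by_cases h : v j = 1
    · rw [if_pos h]
      exact swap_commute_blockPerm (by omega) (by omega) (by omega) (by omega)
        (by omega) (by omega) (by omega) (by omega)
    · rw [if_neg h]
      exact Commute.one_right _
  have hCsW : Commute (Equiv.swap p (p+1)) W := key _ _ (by intro j hj hji; omega)
  have hCtW : Commute (Equiv.swap (p+2) (p+3)) W := key _ _ (by intro j hj hji; omega)
  have hCt'W : Commute (Equiv.swap Bn (Bn+1)) W := key _ _ (by intro j hj hji; omega)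
  set δ : Equiv.Perm ℕ := Equiv.swap (p+2) Bn * Equiv.swap (p+3) (Bn+1) with hδdef
  have hCδW : Commute δ W :=
    Commute.mul_left (key _ _ (by intro j hj hji; omega)) (key _ _ (by intro j hj hji; omega))
  have hδA : δ ∈ AInf := swap_mul_swap_mem (by omega) (by omega)
  have hW2 : W * W = 1 := by
    apply noncommProd_sq
    intro i _
    unfold bfun
    by_cases h : v i = 1
    · rw [if_pos h]; exact blockPerm_sq _
    · rw [if_neg h]; exact one_mul 1
  -- values of δ
  have g1 : δ p = p := by
    have f2 : Equiv.swap (p+3) (Bn+1) p = p := Equiv.swap_apply_of_ne_of_ne (by omega) (by omega)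
    have f1 : Equiv.swap (p+2) Bn p = p := Equiv.swap_apply_of_ne_of_ne (by omega) (by omega)
    rw [hδdef, Equiv.Perm.mul_apply, f2, f1]
  have g2 : δ (p+1) = p+1 := by
    have f2 : Equiv.swap (p+3) (Bn+1) (p+1) = p+1 :=
      Equiv.swap_apply_of_ne_of_ne (by omega) (by omega)
    have f1 : Equiv.swap (p+2) Bn (p+1) = p+1 :=
      Equiv.swap_apply_of_ne_of_ne (by omega) (by omega)
    rw [hδdef, Equiv.Perm.mul_apply, f2, f1]
  have g3 : δ (p+2) = Bn := by
    have f2 : Equiv.swap (p+3) (Bn+1) (p+2) = p+2 :=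
      Equiv.swap_apply_of_ne_of_ne (by omega) (by omega)
    have f1 : Equiv.swap (p+2) Bn (p+2) = Bn := Equiv.swap_apply_left _ _
    rw [hδdef, Equiv.Perm.mul_apply, f2, f1]
  have g4 : δ (p+3) = Bn+1 := by
    have f2 : Equiv.swap (p+3) (Bn+1) (p+3) = Bn+1 := Equiv.swap_apply_left _ _
    have f1 : Equiv.swap (p+2) Bn (Bn+1) = Bn+1 :=
      Equiv.swap_apply_of_ne_of_ne (by omega) (by omega)
    rw [hδdef, Equiv.Perm.mul_apply, f2, f1]
  have hδs : δ * Equiv.swap p (p+1) * δ⁻¹ = Equiv.swap p (p+1) := by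
    rw [← Equiv.swap_apply_apply, g1, g2]
  have hδt : δ * Equiv.swap (p+2) (p+3) * δ⁻¹ = Equiv.swap Bn (Bn+1) := by
    rw [← Equiv.swap_apply_apply, g3, g4]
  have htot : Zmap v * (δ * Zmap v * δ⁻¹)
      = Equiv.swap (p+2) (p+3) * Equiv.swap Bn (Bn+1) := by
    rw [hsplit]
    have h1 : δ * (Equiv.swap p (p+1) * Equiv.swap (p+2) (p+3) * W) * δ⁻¹
        = (δ * Equiv.swap p (p+1) * δ⁻¹) * (δ * Equiv.swap (p+2) (p+3) * δ⁻¹)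
          * (δ * W * δ⁻¹) := by group
    have h3 : δ * W * δ⁻¹ = W := by rw [hCδW.eq, mul_inv_cancel_right]
    rw [h1, h3, hδs, hδt]
    have hCstW : Commute (Equiv.swap p (p+1) * Equiv.swap Bn (Bn+1)) W :=
      Commute.mul_left hCsW hCt'W
    have hst : Commute (Equiv.swap p (p+1)) (Equiv.swap (p+2) (p+3)) :=
      commute_swap_of_ne (by omega) (by omega) (by omega) (by omega)
    calc Equiv.swap p (p+1) * Equiv.swap (p+2) (p+3) * W
          * (Equiv.swap p (p+1) * Equiv.swap Bn (Bn+1) * W)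
        = Equiv.swap p (p+1) * Equiv.swap (p+2) (p+3)
          * (W * (Equiv.swap p (p+1) * Equiv.swap Bn (Bn+1))) * W := by group
      _ = Equiv.swap p (p+1) * Equiv.swap (p+2) (p+3)
          * ((Equiv.swap p (p+1) * Equiv.swap Bn (Bn+1)) * W) * W := by rw [← hCstW.eq]
      _ = Equiv.swap p (p+1) * (Equiv.swap (p+2) (p+3) * Equiv.swap p (p+1))
          * Equiv.swap Bn (Bn+1) * (W * W) := by group
      _ = Equiv.swap p (p+1) * (Equiv.swap p (p+1) * Equiv.swap (p+2) (p+3))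
          * Equiv.swap Bn (Bn+1) * (W * W) := by rw [hst.eq]
      _ = (Equiv.swap p (p+1) * Equiv.swap p (p+1))
          * (Equiv.swap (p+2) (p+3) * Equiv.swap Bn (Bn+1)) * (W * W) := by group
      _ = Equiv.swap (p+2) (p+3) * Equiv.swap Bn (Bn+1) := by
          rw [hW2, Equiv.swap_mul_self, one_mul, mul_one]
  have hu : Equiv.swap (p+2) (p+3) * Equiv.swap Bn (Bn+1) ∈ Kgrp π := by
    rw [← htot]
    exact mul_mem hZ (Kgrp_conj π hδA hZ)
  -- second conjugation
  set δ₂ : Equiv.Perm ℕ := Equiv.swap (Bn+1) (Bn+2) * Equiv.swap (Bn+3) (Bn+4) with hδ₂def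
  have hδ₂A : δ₂ ∈ AInf := swap_mul_swap_mem (by omega) (by omega)
  have k1 : δ₂ (p+2) = p+2 := by
    have f2 : Equiv.swap (Bn+3) (Bn+4) (p+2) = p+2 :=
      Equiv.swap_apply_of_ne_of_ne (by omega) (by omega)
    have f1 : Equiv.swap (Bn+1) (Bn+2) (p+2) = p+2 :=
      Equiv.swap_apply_of_ne_of_ne (by omega) (by omega)
    rw [hδ₂def, Equiv.Perm.mul_apply, f2, f1]
  have k2 : δ₂ (p+3) = p+3 := by
    have f2 : Equiv.swap (Bn+3) (Bn+4) (p+3) = p+3 :=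
      Equiv.swap_apply_of_ne_of_ne (by omega) (by omega)
    have f1 : Equiv.swap (Bn+1) (Bn+2) (p+3) = p+3 :=
      Equiv.swap_apply_of_ne_of_ne (by omega) (by omega)
    rw [hδ₂def, Equiv.Perm.mul_apply, f2, f1]
  have k3 : δ₂ Bn = Bn := by
    have f2 : Equiv.swap (Bn+3) (Bn+4) Bn = Bn :=
      Equiv.swap_apply_of_ne_of_ne (by omega) (by omega)
    have f1 : Equiv.swap (Bn+1) (Bn+2) Bn = Bn :=
      Equiv.swap_apply_of_ne_of_ne (by omega) (by omega)
    rw [hδ₂def, Equiv.Perm.mul_apply, f2, f1]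
  have k4 : δ₂ (Bn+1) = Bn+2 := by
    have f2 : Equiv.swap (Bn+3) (Bn+4) (Bn+1) = Bn+1 :=
      Equiv.swap_apply_of_ne_of_ne (by omega) (by omega)
    have f1 : Equiv.swap (Bn+1) (Bn+2) (Bn+1) = Bn+2 := Equiv.swap_apply_left _ _
    rw [hδ₂def, Equiv.Perm.mul_apply, f2, f1]
  have hu' : Equiv.swap (p+2) (p+3) * Equiv.swap Bn (Bn+2) ∈ Kgrp π := by
    have := Kgrp_conj_swap_pair π hδ₂A hu
    rwa [k1, k2, k3, k4] at this
  have hfinal : Equiv.swap Bn (Bn+1) * Equiv.swap Bn (Bn+2) ∈ Kgrp π := by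
    have hmul := mul_mem hu hu'
    have htt : Commute (Equiv.swap (p+2) (p+3)) (Equiv.swap Bn (Bn+1)) :=
      commute_swap_of_ne (by omega) (by omega) (by omega) (by omega)
    have hcalc : Equiv.swap (p+2) (p+3) * Equiv.swap Bn (Bn+1)
        * (Equiv.swap (p+2) (p+3) * Equiv.swap Bn (Bn+2))
        = Equiv.swap Bn (Bn+1) * Equiv.swap Bn (Bn+2) := by
      calc Equiv.swap (p+2) (p+3) * Equiv.swap Bn (Bn+1)
          * (Equiv.swap (p+2) (p+3) * Equiv.swap Bn (Bn+2))
          = Equiv.swap (p+2) (p+3) * (Equiv.swap Bn (Bn+1) * Equiv.swap (p+2) (p+3))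
            * Equiv.swap Bn (Bn+2) := by group
        _ = Equiv.swap (p+2) (p+3) * (Equiv.swap (p+2) (p+3) * Equiv.swap Bn (Bn+1))
            * Equiv.swap Bn (Bn+2) := by rw [← htt.eq]
        _ = (Equiv.swap (p+2) (p+3) * Equiv.swap (p+2) (p+3))
            * (Equiv.swap Bn (Bn+1) * Equiv.swap Bn (Bn+2)) := by group
        _ = Equiv.swap Bn (Bn+1) * Equiv.swap Bn (Bn+2) := by
            rw [Equiv.swap_mul_self, one_mul]
    rwa [hcalc] at hmul
  refine ⟨Bn+1, Bn, Bn+2, by omega, by omega, by omega, ?_⟩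
  rwa [Equiv.swap_comm (Bn+1) Bn]

end Reduction
section ThreeCycleDecomp
open Equiv Finset

lemma isThreeCycle_decomp {n : ℕ} {σ : Equiv.Perm (Fin n)} (h : σ.IsThreeCycle) :
    ∃ a b c : Fin n, a ≠ b ∧ b ≠ c ∧ a ≠ c ∧ σ = Equiv.swap a b * Equiv.swap b c := by
  obtain ⟨a, ha, -⟩ := h.isCycle
  have h3 : σ ^ 3 = 1 := by
    rw [← h.orderOf]
    exact pow_orderOf_eq_one σ
  have hca : σ (σ (σ a)) = a := by
    have : (σ ^ 3) a = a := by rw [h3]; rfl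
    simpa [pow_succ, Equiv.Perm.mul_apply] using this
  have hab : a ≠ σ a := fun e => ha e.symm
  have hbc : σ a ≠ σ (σ a) := fun e => ha (σ.injective e).symm
  have hac : a ≠ σ (σ a) := by
    intro e
    have h' := congrArg σ e
    rw [hca] at h'
    exact ha h'
  refine ⟨a, σ a, σ (σ a), hab, hbc, hac, ?_⟩
  have hsupp : σ.support = {a, σ a, σ (σ a)} := by
    symm
    apply Finset.eq_of_subset_of_card_le
    · intro x hx
      simp only [Finset.mem_insert, Finset.mem_singleton] at hx
      rcases hx with rfl | rfl | rfl
      · exact Equiv.Perm.mem_support.mpr ha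
      · exact Equiv.Perm.mem_support.mpr fun e => ha (σ.injective e)
      · refine Equiv.Perm.mem_support.mpr fun e => hac ?_
        rw [hca] at e
        exact e
    · rw [h.card_support]
      have hcard : ({a, σ a, σ (σ a)} : Finset (Fin n)).card = 3 := by
        rw [Finset.card_insert_of_notMem (by simp [hab, hac]),
          Finset.card_insert_of_notMem (by simp [hbc]), Finset.card_singleton]
      omega
  ext x
  by_cases hxa : x = a
  · subst hxa
    rw [Equiv.Perm.mul_apply, Equiv.swap_apply_of_ne_of_ne hab hac, Equiv.swap_apply_left]
  by_cases hxb : x = σ a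
  · subst hxb
    rw [Equiv.Perm.mul_apply, Equiv.swap_apply_left,
      Equiv.swap_apply_of_ne_of_ne (Ne.symm hac) (Ne.symm hbc)]
  by_cases hxc : x = σ (σ a)
  · subst hxc
    rw [Equiv.Perm.mul_apply, Equiv.swap_apply_right, Equiv.swap_apply_right, hca]
  · have hfix : σ x = x := by
      have : x ∉ σ.support := by
        rw [hsupp]
        simp [hxa, hxb, hxc]
      exact Equiv.Perm.notMem_support.mp this
    rw [hfix, Equiv.Perm.mul_apply,
      Equiv.swap_apply_of_ne_of_ne hxb hxc, Equiv.swap_apply_of_ne_of_ne hxa hxb]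

end ThreeCycleDecomp
section MainProof
open Equiv Finset

lemma AInf_le_SInf : AInf ≤ SInf := by
  apply iSup_le
  intro n σ hσ
  obtain ⟨τ, -, rfl⟩ := Subgroup.mem_map.mp hσ
  show {x : ℕ | embedPerm n τ x ≠ x}.Finite
  apply (Set.finite_Iio n).subset
  intro x hx
  simp only [Set.mem_setOf_eq] at hx
  by_contra hxn
  simp only [Set.mem_Iio, not_lt] at hxn
  exact hx (embedPerm_apply_ge n τ (by omega))

lemma part1 (d : ℕ) (π : ↥AInf →* UGp d) : ∀ σ : ↥AInf, π σ = 1 := by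
  set m : ℕ := d * d + 1 with hm
  set F : (Fin m → ZMod 2) → Matrix (Fin d) (Fin d) ℂ :=
    fun v => ((π ⟨Zmap v, Zmap_mem_AInf v⟩ : UGp d) : Matrix (Fin d) (Fin d) ℂ) with hF
  have hone : F 0 = 1 := by
    have h0 : (⟨Zmap (0 : Fin m → ZMod 2), Zmap_mem_AInf 0⟩ : ↥AInf) = 1 := by
      apply Subtype.ext
      simpa using Zmap_zero
    simp only [hF]
    rw [h0, _root_.map_one]
    rfl
  have hmul : ∀ v w, F (v + w) = F v * F w := by
    intro v w
    have hvw : (⟨Zmap (v + w), Zmap_mem_AInf _⟩ : ↥AInf)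
        = ⟨Zmap v, Zmap_mem_AInf v⟩ * ⟨Zmap w, Zmap_mem_AInf w⟩ := by
      apply Subtype.ext
      simpa using Zmap_add v w
    simp only [hF]
    rw [hvw, _root_.map_mul]
    rfl
  obtain ⟨v₀, hv₀ne, hv₀⟩ := core_lemma (by omega) F hone hmul
  have hZK : Zmap v₀ ∈ Kgrp π := by
    rw [mem_Kgrp]
    exact ⟨Zmap_mem_AInf v₀, Subtype.ext hv₀⟩
  obtain ⟨a, b, c, hab, hbc, hac, hT⟩ := Zmap_reduction π hv₀ne hZK
  have hall : AInf ≤ Kgrp π := by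
    apply iSup_le
    intro n
    rw [← Equiv.Perm.closure_three_cycles_eq_alternating, MonoidHom.map_closure,
      Subgroup.closure_le]
    rintro x ⟨τ, hτ, rfl⟩
    obtain ⟨x1, x2, x3, h12, h23, h13, rfl⟩ := isThreeCycle_decomp hτ
    rw [_root_.map_mul, embedPerm_swap, embedPerm_swap]
    exact T_conj_all π hab hbc hac
      (fun e => h12 (Fin.val_injective e)) (fun e => h23 (Fin.val_injective e))
      (fun e => h13 (Fin.val_injective e)) hT
  intro σ
  have hσK : (σ : Equiv.Perm ℕ) ∈ Kgrp π := hall σ.2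
  rw [mem_Kgrp] at hσK
  obtain ⟨hmem, h1⟩ := hσK
  have he : (⟨(σ : Equiv.Perm ℕ), hmem⟩ : ↥AInf) = σ := Subtype.ext rfl
  rwa [he] at h1

end MainProof

/-- Every finite-dimensional unitary representation of `A_∞` is trivial;
consequently every finite-dimensional unitary representation of `S_∞` descends to
the quotient by `A_∞`, i.e. factors through the abelianization `S_∞/A_∞ ≅ ℤ/2ℤ`
(the sign homomorphism). -/
theorem aInf_representations_trivial_and_sInf_representations_factor_through_sign :
    (∀ (d : ℕ) (π : ↥AInf →* UGp d), ∀ σ : ↥AInf, π σ = 1) ∧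
    (∀ (d : ℕ) (π : ↥SInf →* UGp d), ∀ σ τ : ↥SInf,
      ((σ * τ⁻¹ : ↥SInf) : Equiv.Perm ℕ) ∈ AInf → π σ = π τ) := by
  constructor
  · exact part1
  · intro d π σ τ h
    have h1 : π ((Subgroup.inclusion AInf_le_SInf)
        ⟨((σ * τ⁻¹ : ↥SInf) : Equiv.Perm ℕ), h⟩) = 1 :=
      part1 d (π.comp (Subgroup.inclusion AInf_le_SInf)) ⟨_, h⟩
    have h2 : (Subgroup.inclusion AInf_le_SInf)
        (⟨((σ * τ⁻¹ : ↥SInf) : Equiv.Perm ℕ), h⟩ : ↥AInf) = σ * τ⁻¹ :=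
      Subtype.ext rfl
    rw [h2] at h1
    have h3 : σ = σ * τ⁻¹ * τ := by group
    conv_lhs => rw [h3]
    rw [_root_.map_mul, h1, one_mul]

end
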